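/- Let n ≥ 1, let ‖·‖ be an arbitrary norm on ℝⁿ, and let c₂ > 0 and c_∞ > 0 be constants with c₂‖v‖ ≤ ‖v‖₂ and ‖v‖_∞ ≤ c_∞‖v‖ for every v ∈ ℝⁿ, where ‖v‖₂ is the Euclidean norm and ‖v‖_∞ the max norm. Let b(z) := Σ_{k=1}^n z_k log(z_k) for z ∈ [0,∞)ⁿ, with the convention 0·log 0 := 0 (the negative Boltzmann–Gibbs–Shannon entropy). Then for every x ∈ [0,∞)ⁿ, every y ∈ (0,∞)ⁿ with ‖y‖ > 2‖x‖, and every λ ∈ (0,1): b(λx + (1−λ)y) + λ(1−λ)·(c₂²/(4c_∞))·‖x − y‖ ≤ λ b(x) + (1−λ) b(y). In other words, b is uniformly convex relative to ({x}, {y ∈ (0,∞)ⁿ : ‖y‖ > 2‖x‖}) with relative gauge ψ(t) = (c₂²/(4c_∞))·t. -/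

import Mathlib

open Real Set


private lemma gder (M : ℝ) {x : ℝ} (hx : x ≠ 0) :
    HasDerivAt (fun t => t * Real.log t - t ^ 2 / (2 * M))
      (Real.log x + 1 - x * M⁻¹) x := by
  have h1 := Real.hasDerivAt_mul_log hx
  have h2 : HasDerivAt (fun t : ℝ => t ^ 2 / (2 * M)) (x * M⁻¹) x := by
    have := (hasDerivAt_pow 2 x).div_const (2 * M)
    exact this.congr_deriv (by push_cast; ring)
  exact h1.sub h2

private lemma phider (M : ℝ) {x : ℝ} (hx : x ≠ 0) :
    HasDerivAt (fun t => Real.log t + 1 - t * M⁻¹) (x⁻¹ - 1 * M⁻¹) x :=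
  ((Real.hasDerivAt_log hx).add_const 1).sub ((hasDerivAt_id x).mul_const M⁻¹)

private lemma gconvex (M : ℝ) (hM : 0 < M) :
    ConvexOn ℝ (Set.Icc 0 M) (fun t => t * Real.log t - t ^ 2 / (2 * M)) := by
  apply convexOn_of_deriv2_nonneg (convex_Icc 0 M)
  · exact (Real.continuous_mul_log.sub (by continuity)).continuousOn
  · intro x hx
    rw [interior_Icc] at hx
    exact (gder M (ne_of_gt hx.1)).differentiableAt.differentiableWithinAt
  · rw [interior_Icc]
    have hφ : DifferentiableOn ℝ (fun t => Real.log t + 1 - t * M⁻¹) (Set.Ioo 0 M) := by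
      intro x hx
      exact (phider M (ne_of_gt hx.1)).differentiableAt.differentiableWithinAt
    exact hφ.congr (fun x hx => (gder M (ne_of_gt hx.1)).deriv)
  · intro x hx
    rw [interior_Icc] at hx
    simp only [Function.iterate_succ, Function.iterate_zero, Function.id_comp,
      Function.comp_apply]
    have hev : deriv (fun t => t * Real.log t - t ^ 2 / (2 * M))
        =ᶠ[nhds x] fun t => Real.log t + 1 - t * M⁻¹ := by
      filter_upwards [eventually_ne_nhds (ne_of_gt hx.1)] with y hy using (gder M hy).deriv
    rw [hev.deriv_eq, (phider M (ne_of_gt hx.1)).deriv]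
    have h1 : M⁻¹ ≤ x⁻¹ := by
      apply inv_anti₀ hx.1 (le_of_lt hx.2)
    linarith

private lemma keypt (M : ℝ) (hM : 0 < M) {a b l : ℝ} (ha : 0 ≤ a) (haM : a ≤ M)
    (hb : 0 ≤ b) (hbM : b ≤ M) (hl0 : 0 ≤ l) (hl1 : l ≤ 1) :
    (l * a + (1 - l) * b) * Real.log (l * a + (1 - l) * b)
        + l * (1 - l) * (a - b) ^ 2 / (2 * M)
      ≤ l * (a * Real.log a) + (1 - l) * (b * Real.log b) := by
  have h := (gconvex M hM).2 (Set.mem_Icc.2 ⟨ha, haM⟩) (Set.mem_Icc.2 ⟨hb, hbM⟩)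
    hl0 (by linarith : (0:ℝ) ≤ 1 - l) (by ring)
  simp only [smul_eq_mul] at h
  have key : l * a ^ 2 + (1 - l) * b ^ 2 - (l * a + (1 - l) * b) ^ 2
      = l * (1 - l) * (a - b) ^ 2 := by ring
  have h2M : (0:ℝ) < 2 * M := by linarith
  have hstep : (l * a ^ 2 + (1 - l) * b ^ 2 - (l * a + (1 - l) * b) ^ 2) / (2 * M)
      = l * (1 - l) * (a - b) ^ 2 / (2 * M) := by rw [key]
  have h' := h
  have hfin : l * (1 - l) * (a - b) ^ 2 / (2 * M)
      = l * (a ^ 2 / (2 * M)) + (1 - l) * (b ^ 2 / (2 * M))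
        - (l * a + (1 - l) * b) ^ 2 / (2 * M) := by
    rw [← hstep]; ring
  linarith [h', hfin.le, hfin.ge]


/-- Relative uniform convexity of the negative
Boltzmann–Gibbs–Shannon entropy `b(z) = Σ z_k log z_k` on `ℝⁿ` with an arbitrary
norm `N` (with equivalence constants `c₂‖v‖ ≤ ‖v‖₂` and `‖v‖_∞ ≤ c_∞‖v‖`): for every
`x ∈ [0,∞)ⁿ`, every `y ∈ (0,∞)ⁿ` with `N y > 2 N x`, and every `λ ∈ (0,1)`,
`b(λx + (1−λ)y) + λ(1−λ)(c₂²/(4c_∞)) N(x − y) ≤ λ b(x) + (1−λ) b(y)`. -/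
theorem shannon_entropy_relative_uniform_convexity
    (n : ℕ) (hn : 1 ≤ n) (N : (Fin n → ℝ) → ℝ)
    (hN_add : ∀ v w : Fin n → ℝ, N (v + w) ≤ N v + N w)
    (hN_smul : ∀ (a : ℝ) (v : Fin n → ℝ), N (a • v) = |a| * N v)
    (c₂ cinf : ℝ) (hc₂ : 0 < c₂) (hcinf : 0 < cinf)
    (h2 : ∀ v : Fin n → ℝ, c₂ * N v ≤ Real.sqrt (∑ k, (v k) ^ 2))
    (hinf : ∀ (v : Fin n → ℝ) (k : Fin n), |v k| ≤ cinf * N v) :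
    ∀ x : Fin n → ℝ, (∀ k, 0 ≤ x k) →
    ∀ y : Fin n → ℝ, (∀ k, 0 < y k) → 2 * N x < N y →
    ∀ l ∈ Set.Ioo (0:ℝ) 1,
      (∑ k, (l * x k + (1 - l) * y k) * Real.log (l * x k + (1 - l) * y k))
          + l * (1 - l) * (c₂ ^ 2 / (4 * cinf)) * N (x - y)
        ≤ l * ∑ k, x k * Real.log (x k)
          + (1 - l) * ∑ k, y k * Real.log (y k) := by
  -- N is nonnegative
  have hN0 : N 0 = 0 := by
    have := hN_smul 0 0
    simpa using this
  have hNneg : ∀ v : Fin n → ℝ, N (-v) = N v := by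
    intro v
    have := hN_smul (-1) v
    simpa using this
  have hNnn : ∀ v : Fin n → ℝ, 0 ≤ N v := by
    intro v
    have h := hN_add v (-v)
    rw [add_neg_cancel, hN0, hNneg] at h
    linarith
  intro x hx y hy hxy l hl
  obtain ⟨hl0, hl1⟩ := hl
  have hNx : 0 ≤ N x := hNnn x
  have hNy : 0 < N y := by linarith
  set M : ℝ := cinf * N y with hMdef
  have hM : 0 < M := mul_pos hcinf hNy
  have hxM : ∀ k, x k ≤ M := fun k => by
    have h1 := hinf x k
    have h2 : cinf * N x ≤ cinf * N y :=
      mul_le_mul_of_nonneg_left (by linarith) hcinf.le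
    calc x k ≤ |x k| := le_abs_self _
      _ ≤ cinf * N x := h1
      _ ≤ M := h2
  have hyM : ∀ k, y k ≤ M := fun k => by
    have h1 := hinf y k
    calc y k ≤ |y k| := le_abs_self _
      _ ≤ M := h1
  -- summed strong convexity
  have H : ∑ k, ((l * x k + (1 - l) * y k) * Real.log (l * x k + (1 - l) * y k)
        + l * (1 - l) * (x k - y k) ^ 2 / (2 * M))
      ≤ ∑ k, (l * (x k * Real.log (x k)) + (1 - l) * (y k * Real.log (y k))) :=
    Finset.sum_le_sum fun k _ =>
      keypt M hM (hx k) (hxM k) (hy k).le (hyM k) hl0.le hl1.le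
  rw [Finset.sum_add_distrib] at H
  have hsd : ∑ k, l * (1 - l) * (x k - y k) ^ 2 / (2 * M)
      = l * (1 - l) * (∑ k, (x k - y k) ^ 2) / (2 * M) := by
    rw [← Finset.sum_div, ← Finset.mul_sum]
  rw [hsd] at H
  rw [Finset.sum_add_distrib, ← Finset.mul_sum, ← Finset.mul_sum] at H
  -- norm comparisons
  set D : ℝ := N (x - y) with hDdef
  set S : ℝ := ∑ k, (x k - y k) ^ 2 with hSdef
  have hSnn : 0 ≤ S := Finset.sum_nonneg fun k _ => sq_nonneg _
  have hS : c₂ ^ 2 * D ^ 2 ≤ S := by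
    have h := h2 (x - y)
    have hsq : (c₂ * N (x - y)) ^ 2 ≤ Real.sqrt (∑ k, ((x - y) k) ^ 2) ^ 2 := by
      apply pow_le_pow_left₀ (mul_nonneg hc₂.le (hNnn _)) h
    rw [Real.sq_sqrt (Finset.sum_nonneg fun k _ => sq_nonneg _)] at hsq
    have heq : (∑ k, ((x - y) k) ^ 2) = S := by
      simp [hSdef, Pi.sub_apply]
    rw [heq] at hsq
    calc c₂ ^ 2 * D ^ 2 = (c₂ * N (x - y)) ^ 2 := by rw [hDdef]; ring
      _ ≤ S := hsq
  have hD : N y / 2 < D := by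
    have h1 : N y ≤ N (y - x) + N x := by
      have := hN_add (y - x) x
      rwa [sub_add_cancel] at this
    have h2 : N (y - x) = D := by
      rw [hDdef, ← hNneg (x - y), neg_sub]
    linarith
  have hDnn : 0 ≤ D := hNnn _
  -- key numeric inequality
  have hkey : c₂ ^ 2 / (4 * cinf) * D ≤ S / (2 * M) := by
    rw [div_mul_eq_mul_div, div_le_div_iff₀ (by positivity) (by positivity)]
    nlinarith [mul_le_mul_of_nonneg_right hS (by positivity : (0:ℝ) ≤ 4 * cinf),
      mul_nonneg (mul_nonneg (mul_nonneg hcinf.le (sq_nonneg c₂)) hDnn)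
        (by linarith : (0:ℝ) ≤ 2 * D - N y)]
  have hll : 0 ≤ l * (1 - l) := mul_nonneg hl0.le (by linarith)
  have hfin : l * (1 - l) * (c₂ ^ 2 / (4 * cinf)) * D ≤ l * (1 - l) * S / (2 * M) := by
    calc l * (1 - l) * (c₂ ^ 2 / (4 * cinf)) * D
        = l * (1 - l) * (c₂ ^ 2 / (4 * cinf) * D) := by ring
      _ ≤ l * (1 - l) * (S / (2 * M)) := mul_le_mul_of_nonneg_left hkey hll
      _ = l * (1 - l) * S / (2 * M) := by ring
  linarith
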